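/- Let U : (0,∞) → [0,∞) be a Borel function such that x ↦ x^r U(x) is integrable on (0,∞) for every r ∈ ℝ and such that ∫₀^∞ x·exp((2imπ/log 2) log x) U(x) dx equals 1 for m = 0 and equals 0 for every m ∈ ℤ \ {0}. Let f : (0,∞) → ℂ be continuous with sup_{x>0} |f(x)|/x < ∞ and f(2x) = 2f(x) for all x > 0. Then sup_{x>0} |f(x) − Σ_{k=−N}^{N} (1 − |k|/N) ν_k(f) φ_k(x)|/x → 0 as N → ∞, where φ_k(x) := x·exp((2ikπ/log 2) log x) and ν_k(f) := ∫₀^∞ exp(−(2ikπ/log 2) log x) U(x) f(x) dx. Consequently any such f lies in the closure, for the norm sup_{x>0}|·|/x, of the linear span of (φ_k)_{k∈ℤ}. -/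

import Mathlib

open MeasureTheory Real Set Filter Topology

noncomputable section

/-- The boundary eigenvalue `λ_k = 1 + 2ikπ/log 2`. -/
def lambdak (k : ℤ) : ℂ :=
  1 + Complex.I * ((2 * (k : ℝ) * Real.pi / Real.log 2 : ℝ) : ℂ)

/-- The adjoint boundary eigenfunction `φ_k(x) = x · exp((2ikπ/log 2) log x)`. -/
def phik (k : ℤ) (x : ℝ) : ℂ :=
  (x : ℂ) * Complex.exp (Complex.I * ((2 * (k : ℝ) * Real.pi / Real.log 2 : ℝ) : ℂ)
      * (Real.log x : ℂ))

/-- The boundary eigenfunction `U_k(x) = exp(-(2ikπ/log 2) log x) U(x)`. -/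
def Uk (U : ℝ → ℝ) (k : ℤ) (x : ℝ) : ℂ :=
  Complex.exp (-(Complex.I * ((2 * (k : ℝ) * Real.pi / Real.log 2 : ℝ) : ℂ))
      * (Real.log x : ℂ)) * (U x : ℂ)

/-- The linear form `ν_k(f) = ∫₀^∞ U_k(x) f(x) dx` (complex-valued `f`). -/
def nuk (U : ℝ → ℝ) (k : ℤ) (f : ℝ → ℂ) : ℂ :=
  ∫ x in Ioi (0:ℝ), Uk U k x * f x

/-! ### Auxiliary: characters `ee k t = exp(2πikt)` and the Fejér kernel -/

/-- `ee k t = exp (2πikt)`. -/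
def ee (k : ℤ) (t : ℝ) : ℂ :=
  Complex.exp (2 * (Real.pi:ℂ) * Complex.I * (k:ℂ) * (t:ℂ))

lemma ee_add (a b : ℤ) (t : ℝ) : ee (a + b) t = ee a t * ee b t := by
  rw [ee, ee, ee, ← Complex.exp_add]; congr 1; push_cast; ring

lemma ee_zero (t : ℝ) : ee 0 t = 1 := by simp [ee]

lemma ee_sub (k : ℤ) (t s : ℝ) : ee k (t - s) = ee k t * ee (-k) s := by
  rw [ee, ee, ee, ← Complex.exp_add]; congr 1; push_cast; ring

lemma norm_ee (k : ℤ) (t : ℝ) : ‖ee k t‖ = 1 := by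
  have : (2 * (Real.pi:ℂ) * Complex.I * (k:ℂ) * (t:ℂ))
      = ((2 * Real.pi * k * t : ℝ) : ℂ) * Complex.I := by push_cast; ring
  rw [ee, this, Complex.norm_exp_ofReal_mul_I]

lemma ee_continuous (k : ℤ) : Continuous (ee k) := by
  unfold ee; fun_prop

lemma conj_ee (k : ℤ) (t : ℝ) : (starRingEnd ℂ) (ee k t) = ee (-k) t := by
  rw [ee, ee, ← Complex.exp_conj, map_mul, map_mul, map_mul, map_mul, Complex.conj_I]
  push_cast
  simp only [Complex.conj_ofReal, map_ofNat, map_intCast]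
  ring_nf

lemma reindex1 (E : ℤ → ℂ) (N : ℕ) :
    ∑ j ∈ Finset.range N, E ((j:ℤ) - N) = ∑ k ∈ Finset.Icc (-(N:ℤ)) (-1), E k := by
  apply Finset.sum_nbij' (i := fun (j : ℕ) => (j:ℤ) - N) (j := fun (k : ℤ) => (k + N).toNat)
  all_goals intro a ha <;> simp at ha ⊢ <;> omega

lemma reindex2 (E : ℤ → ℂ) (N : ℕ) :
    ∑ l ∈ Finset.range N, E ((N:ℤ) - l) = ∑ k ∈ Finset.Icc (1:ℤ) N, E k := by
  apply Finset.sum_nbij' (i := fun (l : ℕ) => (N:ℤ) - l) (j := fun (k : ℤ) => (N - k).toNat)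
  all_goals intro a ha <;> simp at ha ⊢ <;> omega

lemma icc_split (E : ℤ → ℂ) (N : ℕ) :
    ∑ k ∈ Finset.Icc (-(N:ℤ)) N, E k
      = (∑ k ∈ Finset.Icc (-(N:ℤ)) (-1), E k) + E 0 + ∑ k ∈ Finset.Icc (1:ℤ) N, E k := by
  have h1 : Finset.Icc (-(N:ℤ)) N = Finset.Icc (-(N:ℤ)) (-1) ∪ Finset.Icc (0:ℤ) N := by
    ext k; simp; omega
  have h2 : Finset.Icc (0:ℤ) N = insert (0:ℤ) (Finset.Icc (1:ℤ) N) := by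
    ext k; simp; omega
  rw [h1, Finset.sum_union (by rw [Finset.disjoint_left]; intro a ha hb; simp at ha hb; omega),
    h2, Finset.sum_insert (by simp), add_assoc]

lemma count_sum (E : ℤ → ℂ) (hE : ∀ a b : ℤ, E (a + b) = E a * E b) :
    ∀ N : ℕ, (∑ j ∈ Finset.range N, E j) * (∑ l ∈ Finset.range N, E (-(l:ℤ))) =
      ∑ k ∈ Finset.Icc (-(N:ℤ)) N, (((N:ℤ) - |k| : ℤ) : ℂ) * E k := by
  intro N
  induction N with
  | zero => simp
  | succ N ih =>
    rw [Finset.sum_range_succ, Finset.sum_range_succ, add_mul, mul_add, mul_add]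
    have e1 : (∑ j ∈ Finset.range N, E (j:ℤ)) * E (-(N:ℤ))
        = ∑ k ∈ Finset.Icc (-(N:ℤ)) (-1), E k := by
      rw [Finset.sum_mul, ← reindex1 E N]
      exact Finset.sum_congr rfl fun j _ => by rw [← hE]; ring_nf
    have e2 : E (N:ℤ) * (∑ l ∈ Finset.range N, E (-(l:ℤ)))
        = ∑ k ∈ Finset.Icc (1:ℤ) N, E k := by
      rw [Finset.mul_sum, ← reindex2 E N]
      exact Finset.sum_congr rfl fun l _ => by rw [← hE]; ring_nf
    have e3 : E (N:ℤ) * E (-(N:ℤ)) = E 0 := by rw [← hE]; ring_nf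
    have rhs : ∑ k ∈ Finset.Icc (-((N:ℤ)+1)) ((N:ℤ)+1), ((((N:ℤ)+1) - |k| : ℤ) : ℂ) * E k
        = (∑ k ∈ Finset.Icc (-(N:ℤ)) N, (((N:ℤ) - |k| : ℤ) : ℂ) * E k)
          + ∑ k ∈ Finset.Icc (-(N:ℤ)) N, E k := by
      have hsub : ∑ k ∈ Finset.Icc (-(N:ℤ)) N, ((((N:ℤ)+1) - |k| : ℤ) : ℂ) * E k
          = ∑ k ∈ Finset.Icc (-((N:ℤ)+1)) ((N:ℤ)+1), ((((N:ℤ)+1) - |k| : ℤ) : ℂ) * E k := by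
        apply Finset.sum_subset (by intro k hk; simp at hk ⊢; omega)
        intro k hk hk2; simp only [Finset.mem_Icc] at hk hk2
        have h0 : ((N:ℤ)+1) - |k| = 0 := by rw [Int.abs_eq_natAbs]; omega
        simp [h0]
      rw [← hsub, ← Finset.sum_add_distrib]
      exact Finset.sum_congr rfl fun k hk => by push_cast; ring
    push_cast
    push_cast at rhs ih
    rw [rhs, ← ih, e1, e2, e3, icc_split]
    ring

/-- Dirichlet-type partial sum. -/
def DD (N : ℕ) (t : ℝ) : ℂ := ∑ j ∈ Finset.range N, ee j t

/-- The Fejér kernel. -/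
def Fr (N : ℕ) (t : ℝ) : ℝ := ‖DD N t‖^2 / N

lemma Fr_nonneg (N : ℕ) (t : ℝ) : 0 ≤ Fr N t :=
  div_nonneg (by positivity) (Nat.cast_nonneg N)

lemma Fr_le (N : ℕ) (t : ℝ) : Fr N t ≤ N := by
  have h1 : ‖DD N t‖ ≤ N := by
    calc ‖DD N t‖ ≤ ∑ j ∈ Finset.range N, ‖ee j t‖ := norm_sum_le _ _
    _ = N := by simp only [norm_ee]; simp
  rcases Nat.eq_zero_or_pos N with h | h
  · simp [h, Fr]
  · rw [Fr, div_le_iff₀ (by exact_mod_cast h)]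
    calc ‖DD N t‖^2 ≤ (N:ℝ)^2 := by
          apply pow_le_pow_left₀ (norm_nonneg _) h1
    _ = (N:ℝ) * N := by ring

lemma Fr_continuous (N : ℕ) : Continuous (Fr N) := by
  unfold Fr
  apply Continuous.div_const
  apply Continuous.pow
  apply Continuous.norm
  unfold DD
  exact continuous_finset_sum _ (fun j _ => ee_continuous j)

lemma fejer_eq (N : ℕ) (hN : 1 ≤ N) (t : ℝ) :
    ∑ k ∈ Finset.Icc (-(N:ℤ)) N, (((1:ℝ) - (|k|:ℝ) / N : ℝ) : ℂ) * ee k t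
      = ((Fr N t : ℝ) : ℂ) := by
  have hN0 : (N:ℝ) ≠ 0 := Nat.cast_ne_zero.mpr (by omega)
  have key : (DD N t) * (starRingEnd ℂ) (DD N t)
      = ∑ k ∈ Finset.Icc (-(N:ℤ)) N, (((N:ℤ) - |k| : ℤ) : ℂ) * ee k t := by
    rw [DD, map_sum]
    rw [show ∑ j ∈ Finset.range N, (starRingEnd ℂ) (ee j t)
        = ∑ j ∈ Finset.range N, ee (-(j:ℤ)) t from Finset.sum_congr rfl fun j _ => conj_ee j t]
    exact count_sum (fun k => ee k t) (fun a b => ee_add a b t) N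
  have key2 : (DD N t) * (starRingEnd ℂ) (DD N t) = ((‖DD N t‖^2 : ℝ) : ℂ) := by
    rw [Complex.mul_conj, Complex.normSq_eq_norm_sq]
  apply mul_left_cancel₀ (a := ((N:ℝ) : ℂ)) (by exact_mod_cast hN0)
  rw [Finset.mul_sum]
  have hco : ∀ k ∈ Finset.Icc (-(N:ℤ)) N,
      ((N:ℝ):ℂ) * ((((1:ℝ) - (|k|:ℝ) / N : ℝ) : ℂ) * ee k t)
        = (((N:ℤ) - |k| : ℤ) : ℂ) * ee k t := by
    intro k _
    have hcast : ((N:ℝ) : ℂ) * (((1:ℝ) - (|k|:ℝ) / N : ℝ) : ℂ) = (((N:ℤ) - |k| : ℤ) : ℂ) := by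
      have hN0' : ((N:ℕ) : ℂ) ≠ 0 := Nat.cast_ne_zero.mpr (by omega)
      push_cast
      field_simp
      norm_cast
    rw [← mul_assoc, hcast]
  rw [Finset.sum_congr rfl hco, ← key, key2, Fr]
  rw [Complex.ofReal_div]
  have hN0' : ((N:ℕ) : ℂ) ≠ 0 := Nat.cast_ne_zero.mpr (by omega)
  push_cast
  field_simp

/-- Fejér-type approximation. -/
theorem stmt10 (U : ℝ → ℝ) (hU0 : ∀ x > 0, 0 ≤ U x) (hUmeas : Measurable U)
    (hUint : ∀ r : ℝ, IntegrableOn (fun x => x ^ r * U x) (Ioi 0))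
    (horth : ∀ m : ℤ, (∫ x in Ioi (0:ℝ), phik m x * (U x : ℂ))
      = if m = 0 then 1 else 0)
    (f : ℝ → ℂ) (hfc : ContinuousOn f (Ioi 0))
    (hfb : ∃ C, ∀ x > 0, ‖f x‖ ≤ C * x)
    (hf2 : ∀ x > 0, f (2 * x) = 2 * f x) :
    (∀ ε > 0, ∃ N₀ : ℕ, ∀ N ≥ N₀, ∀ x > 0,
      ‖f x - ∑ k ∈ Finset.Icc (-(N : ℤ)) (N : ℤ),
        (((1 : ℝ) - (|k| : ℝ) / (N : ℝ) : ℝ) : ℂ) * nuk U k f * phik k x‖ ≤ ε * x) ∧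
    (∀ ε > 0, ∃ g ∈ Submodule.span ℂ (Set.range fun k : ℤ => phik k),
      ∀ x > 0, ‖f x - g x‖ ≤ ε * x) := by
  classical
  obtain ⟨C, hC⟩ := hfb
  have hl2 : Real.log 2 ≠ 0 := (Real.log_pos (by norm_num)).ne'
  set τ : ℝ → ℝ := fun x => Real.log x / Real.log 2 with hτdef
  have hτm : Measurable τ := Real.measurable_log.div_const _
  set Ef : ℝ → ℝ := fun t => Real.exp (Real.log 2 * t) with hEdef
  have hEpos : ∀ t, 0 < Ef t := fun t => Real.exp_pos _
  have hEτ : ∀ x : ℝ, 0 < x → Ef (τ x) = x := by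
    intro x hx
    simp only [hEdef, hτdef]
    rw [mul_div_cancel₀ _ hl2, Real.exp_log hx]
  set g : ℝ → ℂ := fun t => f (Ef t) / ((Ef t : ℝ) : ℂ) with hgdef
  have hgcont : Continuous g := by
    apply Continuous.div
    · exact hfc.comp_continuous (by fun_prop) (fun t => hEpos t)
    · fun_prop
    · intro t; exact_mod_cast (hEpos t).ne'
  have hfg : ∀ x : ℝ, 0 < x → f x = (x : ℂ) * g (τ x) := by
    intro x hx
    have hx0 : ((x:ℝ) : ℂ) ≠ 0 := Complex.ofReal_ne_zero.mpr hx.ne'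
    simp only [hgdef, hEτ x hx]
    field_simp
  have hgb : ∀ t, ‖g t‖ ≤ max C 0 := by
    intro t
    have h1 := hC (Ef t) (hEpos t)
    simp only [hgdef]
    rw [norm_div, Complex.norm_real, Real.norm_eq_abs, abs_of_pos (hEpos t)]
    rw [div_le_iff₀ (hEpos t)]
    calc ‖f (Ef t)‖ ≤ C * Ef t := h1
    _ ≤ max C 0 * Ef t := by
        apply mul_le_mul_of_nonneg_right (le_max_left _ _) (hEpos t).le
  -- the weight x ↦ x U(x) is integrable on (0, ∞)
  have hXU : IntegrableOn (fun x => x * U x) (Ioi (0:ℝ)) := by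
    have := hUint 1
    simpa [Real.rpow_one] using this
  -- integrability of the basic integrands
  have hintR : ∀ (φ : ℝ → ℝ), Measurable φ → ∀ B : ℝ, (∀ t, |φ t| ≤ B) →
      IntegrableOn (fun x => x * U x * φ (τ x)) (Ioi (0:ℝ)) := by
    intro φ hm B hB
    apply Integrable.mono' (hXU.const_mul B)
    · exact ((measurable_id.mul hUmeas).mul (hm.comp hτm)).aestronglyMeasurable
    · filter_upwards [ae_restrict_mem measurableSet_Ioi] with x hx
      have hx0 : (0:ℝ) < x := hx
      have hU := hU0 x hx0
      rw [Real.norm_eq_abs, abs_mul, abs_mul, abs_of_pos hx0, abs_of_nonneg hU]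
      calc x * U x * |φ (τ x)| ≤ x * U x * B := by
            apply mul_le_mul_of_nonneg_left (hB _) (by positivity)
      _ = B * (x * U x) := by ring
  have hint : ∀ (ψ : ℝ → ℂ), Measurable ψ → ∀ B : ℝ, (∀ t, ‖ψ t‖ ≤ B) →
      IntegrableOn (fun x : ℝ => (x:ℂ) * (U x : ℂ) * ψ (τ x)) (Ioi (0:ℝ)) := by
    intro ψ hm B hB
    apply Integrable.mono' (hXU.const_mul B)
    · exact ((Complex.measurable_ofReal.mul
        (Complex.measurable_ofReal.comp hUmeas)).mul (hm.comp hτm)).aestronglyMeasurable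
    · filter_upwards [ae_restrict_mem measurableSet_Ioi] with x hx
      have hx0 : (0:ℝ) < x := hx
      have hU := hU0 x hx0
      rw [norm_mul, norm_mul, Complex.norm_real, Complex.norm_real, Real.norm_eq_abs,
        Real.norm_eq_abs, abs_of_pos hx0, abs_of_nonneg hU]
      calc x * U x * ‖ψ (τ x)‖ ≤ x * U x * B := by
            apply mul_le_mul_of_nonneg_left (hB _) (by positivity)
      _ = B * (x * U x) := by ring
  -- orthogonality in character form
  have korth : ∀ m : ℤ, (∫ x in Ioi (0:ℝ), (x:ℂ) * (U x : ℂ) * ee m (τ x))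
      = if m = 0 then 1 else 0 := by
    intro m
    rw [← horth m]
    apply setIntegral_congr_fun measurableSet_Ioi
    intro x _
    simp only [phik, hτdef]
    rw [ee]
    rw [mul_comm ((x:ℂ) * Complex.exp _) ((U x : ℂ))]
    rw [show (Complex.exp (Complex.I * ((2 * (m : ℝ) * Real.pi / Real.log 2 : ℝ) : ℂ)
        * (Real.log x : ℂ))) = Complex.exp (2 * (Real.pi:ℂ) * Complex.I * (m:ℂ)
        * (((Real.log x / Real.log 2 : ℝ)) : ℂ)) from by congr 1; push_cast; ring]
    ring
  -- ν_k(f) in character form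
  have hνg : ∀ k : ℤ, nuk U k f
      = ∫ x in Ioi (0:ℝ), (x:ℂ) * (U x : ℂ) * (g (τ x) * ee (-k) (τ x)) := by
    intro k
    rw [nuk]
    apply setIntegral_congr_fun measurableSet_Ioi
    intro x hx
    simp only [Uk]
    rw [hfg x hx]
    rw [show Complex.exp (-(Complex.I * ((2 * (k : ℝ) * Real.pi / Real.log 2 : ℝ) : ℂ))
        * (Real.log x : ℂ)) = ee (-k) (τ x) from by
      rw [ee]; congr 1; simp only [hτdef]; push_cast; ring]
    ring
  -- φ_k in character form
  have hφ : ∀ (k : ℤ) (x : ℝ), phik k x = (x:ℂ) * ee k (τ x) := by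
    intro k x
    rw [phik, ee]
    congr 2
    simp only [hτdef]
    push_cast
    ring
  -- the universal approximation statement (main part)
  have main : ∀ ε > 0, ∃ N₀ : ℕ, 1 ≤ N₀ ∧ ∀ N ≥ N₀, ∀ x > 0,
      ‖f x - ∑ k ∈ Finset.Icc (-(N : ℤ)) (N : ℤ),
        (((1 : ℝ) - (|k| : ℝ) / (N : ℝ) : ℝ) : ℂ) * nuk U k f * phik k x‖ ≤ ε * x := by
    intro ε hε
    -- Step 1: trigonometric approximation of g
    haveI : Fact ((0:ℝ) < 1) := ⟨one_pos⟩
    have hgper : Function.Periodic g 1 := by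
      intro t
      have h2 : Ef (t + 1) = 2 * Ef t := by
        simp only [hEdef]
        rw [mul_add, mul_one, Real.exp_add, Real.exp_log (by norm_num : (0:ℝ) < 2)]
        ring
      simp only [hgdef, h2]
      rw [hf2 (Ef t) (hEpos t)]
      have hEne : ((Ef t : ℝ) : ℂ) ≠ 0 := Complex.ofReal_ne_zero.mpr (hEpos t).ne'
      push_cast
      rw [mul_div_mul_left _ _ (by norm_num : (2:ℂ) ≠ 0)]
    have hGcont : Continuous hgper.lift :=
      (QuotientAddGroup.isQuotientMap_mk _).continuous_iff.mpr hgcont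
    set G : C(AddCircle (1:ℝ), ℂ) := ⟨hgper.lift, hGcont⟩ with hGdef
    have hGmem : G ∈ closure ((Submodule.span ℂ (Set.range (@fourier 1))) : Set C(AddCircle (1:ℝ), ℂ)) := by
      have := span_fourier_closure_eq_top (T := 1)
      rw [← Submodule.topologicalClosure_coe, this]
      trivial
    obtain ⟨p, hpmem, hpdist⟩ := Metric.mem_closure_iff.mp hGmem (ε/3) (by positivity)
    obtain ⟨c, hc⟩ := Finsupp.mem_span_range_iff_exists_finsupp.mp hpmem
    set P : ℝ → ℂ := fun t => ∑ m ∈ c.support, c m * ee m t with hPdef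
    have hPval : ∀ t : ℝ, p ((t : ℝ) : AddCircle (1:ℝ)) = P t := by
      intro t
      rw [← hc, Finsupp.sum]
      simp only [ContinuousMap.coe_sum, Finset.sum_apply, ContinuousMap.coe_smul,
        Pi.smul_apply, smul_eq_mul, hPdef]
      refine Finset.sum_congr rfl fun m _ => ?_
      rw [fourier_coe_apply]
      congr 1
      rw [ee]
      push_cast
      rw [div_one]
    have hgP : ∀ t : ℝ, ‖g t - P t‖ ≤ ε/3 := by
      intro t
      have h1 : g t = G ((t : ℝ) : AddCircle (1:ℝ)) := rfl
      rw [h1, ← hPval t]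
      calc ‖G ((t:ℝ) : AddCircle (1:ℝ)) - p ((t:ℝ) : AddCircle (1:ℝ))‖
          = ‖(G - p) ((t:ℝ) : AddCircle (1:ℝ))‖ := by simp
      _ ≤ ‖G - p‖ := ContinuousMap.norm_coe_le_norm _ _
      _ ≤ ε/3 := by
          rw [← dist_eq_norm]
          exact hpdist.le
    -- Step 2: setup of constants
    have hPcont : Continuous P := by
      apply continuous_finset_sum
      exact fun m _ => continuous_const.mul (ee_continuous m)
    set BP : ℝ := ∑ m ∈ c.support, ‖c m‖ with hBPdef
    have hPb : ∀ s : ℝ, ‖P s‖ ≤ BP := by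
      intro s
      calc ‖P s‖ ≤ ∑ m ∈ c.support, ‖c m * ee m s‖ := norm_sum_le _ _
      _ = ∑ m ∈ c.support, ‖c m‖ := by
          refine Finset.sum_congr rfl fun m _ => ?_
          rw [norm_mul, norm_ee, mul_one]
      _ = BP := rfl
    set M : ℝ := ∑ m ∈ c.support, ‖c m‖ * |(m:ℝ)| with hMdef
    have hM0 : 0 ≤ M := Finset.sum_nonneg fun m _ => by positivity
    refine ⟨max 1 (Nat.ceil (3 * M / ε) + 1), le_max_left _ _, ?_⟩
    intro N hN x hx
    have hN1 : 1 ≤ N := le_trans (le_max_left _ _) hN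
    have hNpos : (0:ℝ) < N := by exact_mod_cast hN1
    have hMN : M / N ≤ ε / 3 := by
      have h2 : (Nat.ceil (3 * M / ε) : ℝ) ≤ N := by
        exact_mod_cast le_trans (Nat.le_succ _) (le_trans (le_max_right _ _) hN)
      have h1 : (3 * M / ε : ℝ) ≤ N := le_trans (Nat.le_ceil _) h2
      rw [div_le_iff₀ hε] at h1
      rw [div_le_div_iff₀ hNpos (by norm_num)]
      linarith
    set t : ℝ := τ x with htdef
    set w : ℤ → ℂ := fun k => (((1:ℝ) - (|k|:ℝ) / N : ℝ) : ℂ) with hwdef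
    set h : ℝ → ℂ := fun s => g s - P s with hhdef
    have hhm : Measurable h := (hgcont.sub hPcont).measurable
    have hhb : ∀ s : ℝ, ‖h s‖ ≤ ε / 3 := hgP
    -- integrability of all the relevant integrands
    have intP : ∀ k : ℤ, IntegrableOn
        (fun x : ℝ => (x:ℂ) * (U x : ℂ) * (P (τ x) * ee k (τ x))) (Ioi (0:ℝ)) := by
      intro k
      apply hint _ (hPcont.measurable.mul (ee_continuous k).measurable) BP
      intro s
      rw [Pi.mul_apply, norm_mul, norm_ee, mul_one]
      exact hPb s
    have inth : ∀ k : ℤ, IntegrableOn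
        (fun x : ℝ => (x:ℂ) * (U x : ℂ) * (h (τ x) * ee k (τ x))) (Ioi (0:ℝ)) := by
      intro k
      apply hint _ (hhm.mul (ee_continuous k).measurable) (ε/3)
      intro s
      rw [Pi.mul_apply, norm_mul, norm_ee, mul_one]
      exact hhb s
    have intee : ∀ k : ℤ, IntegrableOn
        (fun x : ℝ => (x:ℂ) * (U x : ℂ) * ee k (τ x)) (Ioi (0:ℝ)) := by
      intro k
      exact hint _ (ee_continuous k).measurable 1 (fun s => le_of_eq (norm_ee k s))
    -- the P-coefficients are the c-coefficients
    have hcP : ∀ k : ℤ,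
        (∫ x in Ioi (0:ℝ), (x:ℂ) * (U x : ℂ) * (P (τ x) * ee (-k) (τ x))) = c k := by
      intro k
      have h1 : (∫ x in Ioi (0:ℝ), (x:ℂ) * (U x : ℂ) * (P (τ x) * ee (-k) (τ x)))
          = ∫ x in Ioi (0:ℝ), ∑ m ∈ c.support,
              c m * ((x:ℂ) * (U x : ℂ) * ee (m + -k) (τ x)) := by
        apply integral_congr_ae
        filter_upwards with y
        simp only [hPdef, Finset.sum_mul, Finset.mul_sum]
        refine Finset.sum_congr rfl fun m _ => ?_
        rw [ee_add]
        ring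
      rw [h1, integral_finset_sum _ (fun m _ => ((intee (m + -k)).const_mul (c m)))]
      have h2 : ∀ m ∈ c.support,
          (∫ x in Ioi (0:ℝ), c m * ((x:ℂ) * (U x : ℂ) * ee (m + -k) (τ x)))
            = if m = k then c m else 0 := by
        intro m _
        rw [integral_const_mul, korth (m + -k)]
        by_cases hmk : m = k
        · simp [hmk]
        · rw [if_neg (fun hc0 => hmk (by omega)), if_neg hmk, mul_zero]
      rw [Finset.sum_congr rfl h2, Finset.sum_ite_eq' c.support k (fun m => c m)]
      by_cases hks : k ∈ c.support
      · rw [if_pos hks]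
      · rw [if_neg hks, (Finsupp.notMem_support_iff.mp hks)]
    -- the ν-coefficients split
    have hsplitν : ∀ k : ℤ, nuk U k f
        = c k + ∫ x in Ioi (0:ℝ), (x:ℂ) * (U x : ℂ) * (h (τ x) * ee (-k) (τ x)) := by
      intro k
      rw [hνg k, ← hcP k, ← integral_add (intP (-k)) (inth (-k))]
      apply integral_congr_ae
      filter_upwards with y
      simp only [hhdef]
      ring
    -- reduction to the circle estimate
    set TP : ℂ := ∑ k ∈ Finset.Icc (-(N:ℤ)) N, w k * c k * ee k t with hTPdef
    set TH : ℂ := ∑ k ∈ Finset.Icc (-(N:ℤ)) N,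
      w k * (∫ x in Ioi (0:ℝ), (x:ℂ) * (U x : ℂ) * (h (τ x) * ee (-k) (τ x))) * ee k t
      with hTHdef
    have hTT : ∑ k ∈ Finset.Icc (-(N:ℤ)) N, w k * nuk U k f * ee k t = TP + TH := by
      rw [hTPdef, hTHdef, ← Finset.sum_add_distrib]
      refine Finset.sum_congr rfl fun k _ => ?_
      rw [hsplitν k]
      ring
    -- (D) ‖P t - TP‖ ≤ M / N
    have hD : ‖P t - TP‖ ≤ M / N := by
      set s : Finset ℤ := c.support ∪ Finset.Icc (-(N:ℤ)) N with hsdef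
      have hP_ext : P t = ∑ m ∈ s, c m * ee m t := by
        apply Finset.sum_subset Finset.subset_union_left
        intro m _ hm
        rw [Finsupp.notMem_support_iff.mp hm, zero_mul]
      have hTP_ext : TP = ∑ m ∈ s,
          (if m ∈ Finset.Icc (-(N:ℤ)) N then w m * c m * ee m t else 0) := by
        rw [hTPdef]
        rw [Finset.sum_ite_mem]
        congr 1
        rw [Finset.union_inter_cancel_right]
      rw [hP_ext, hTP_ext, ← Finset.sum_sub_distrib]
      calc ‖∑ m ∈ s, (c m * ee m t
            - if m ∈ Finset.Icc (-(N:ℤ)) N then w m * c m * ee m t else 0)‖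
          ≤ ∑ m ∈ s, ‖c m * ee m t
            - if m ∈ Finset.Icc (-(N:ℤ)) N then w m * c m * ee m t else 0‖ :=
            norm_sum_le _ _
      _ ≤ ∑ m ∈ s, ‖c m‖ * (|(m:ℝ)| / N) := by
          apply Finset.sum_le_sum
          intro m _
          by_cases hm : m ∈ Finset.Icc (-(N:ℤ)) N
          · rw [if_pos hm]
            have heq : c m * ee m t - w m * c m * ee m t
                = (((|(m:ℝ)| / N : ℝ)) : ℂ) * (c m * ee m t) := by
              rw [hwdef]
              push_cast
              ring
            rw [heq, norm_mul, norm_mul, norm_ee, mul_one, Complex.norm_real,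
              Real.norm_eq_abs, abs_of_nonneg (by positivity), mul_comm]
          · rw [if_neg hm, sub_zero, norm_mul, norm_ee, mul_one]
            have hmN' : (N:ℤ) < |m| := by
              simp only [Finset.mem_Icc, not_and_or, not_le] at hm
              rw [Int.abs_eq_natAbs]
              omega
            have hmN : (N:ℝ) < |(m:ℝ)| := by
              calc (N:ℝ) < ((|m| : ℤ) : ℝ) := by exact_mod_cast hmN'
              _ = |(m:ℝ)| := by push_cast; ring
            have : (1:ℝ) ≤ |(m:ℝ)| / N := by
              rw [le_div_iff₀ hNpos]
              linarith
            calc ‖c m‖ = ‖c m‖ * 1 := by ring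
            _ ≤ ‖c m‖ * (|(m:ℝ)| / N) := by
                apply mul_le_mul_of_nonneg_left this (norm_nonneg _)
      _ = (∑ m ∈ s, ‖c m‖ * |(m:ℝ)|) / N := by
          rw [Finset.sum_div]
          exact Finset.sum_congr rfl fun m _ => by ring
      _ = M / N := by
          congr 1
          rw [hMdef]
          apply (Finset.sum_subset Finset.subset_union_left _).symm
          intro m _ hm
          rw [Finsupp.notMem_support_iff.mp hm]
          simp
    -- (E) ‖TH‖ ≤ ε / 3
    have hE : ‖TH‖ ≤ ε / 3 := by
      have hTH_int : TH = ∫ x in Ioi (0:ℝ),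
          (x:ℂ) * (U x : ℂ) * (h (τ x) * ((Fr N (t - τ x) : ℝ) : ℂ)) := by
        rw [hTHdef]
        have h1 : ∀ k ∈ Finset.Icc (-(N:ℤ)) N,
            w k * (∫ x in Ioi (0:ℝ), (x:ℂ) * (U x : ℂ) * (h (τ x) * ee (-k) (τ x))) * ee k t
              = ∫ x in Ioi (0:ℝ),
                (w k * ee k t) * ((x:ℂ) * (U x : ℂ) * (h (τ x) * ee (-k) (τ x))) := by
          intro k _
          rw [integral_const_mul]
          ring
        rw [Finset.sum_congr rfl h1,
          ← integral_finset_sum _ (fun k _ => ((inth (-k)).const_mul (w k * ee k t)))]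
        apply integral_congr_ae
        filter_upwards with y
        rw [← fejer_eq N hN1 (t - τ y), Finset.mul_sum, Finset.mul_sum]
        refine Finset.sum_congr rfl fun k _ => ?_
        rw [ee_sub]
        ring
      -- the total mass of the weighted Fejér kernel is 1
      have hmass : (∫ x in Ioi (0:ℝ), x * U x * Fr N (t - τ x)) = 1 := by
        have hcm : (∫ x in Ioi (0:ℝ), (x:ℂ) * (U x : ℂ) * ((Fr N (t - τ x) : ℝ) : ℂ)) = 1 := by
          have h1 : ∀ᵐ (y : ℝ) ∂(volume.restrict (Ioi (0:ℝ))),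
              (y:ℂ) * (U y : ℂ) * ((Fr N (t - τ y) : ℝ) : ℂ)
                = ∑ k ∈ Finset.Icc (-(N:ℤ)) N,
                  (w k * ee k t) * ((y:ℂ) * (U y : ℂ) * ee (-k) (τ y)) := by
            filter_upwards with y
            rw [← fejer_eq N hN1 (t - τ y), Finset.mul_sum]
            refine Finset.sum_congr rfl fun k _ => ?_
            rw [ee_sub]
            ring
          rw [integral_congr_ae h1,
            integral_finset_sum _ (fun k _ => ((intee (-k)).const_mul (w k * ee k t)))]
          have h2 : ∀ k ∈ Finset.Icc (-(N:ℤ)) N,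
              (∫ x in Ioi (0:ℝ), (w k * ee k t) * ((x:ℂ) * (U x : ℂ) * ee (-k) (τ x)))
                = if k = 0 then 1 else 0 := by
            intro k _
            rw [integral_const_mul, korth (-k)]
            by_cases hk : k = 0
            · simp [hk, hwdef, ee_zero]
            · rw [if_neg (fun hc0 => hk (by omega)), if_neg hk, mul_zero]
          rw [Finset.sum_congr rfl h2, Finset.sum_ite_eq' _ (0:ℤ) (fun _ => (1:ℂ))]
          rw [if_pos (Finset.mem_Icc.mpr ⟨by omega, by omega⟩)]
        have h3 : (∫ x in Ioi (0:ℝ), (((x * U x * Fr N (t - τ x) : ℝ)) : ℂ))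
            = (((∫ x in Ioi (0:ℝ), x * U x * Fr N (t - τ x)) : ℝ) : ℂ) := integral_ofReal
        have h4 : (∫ x in Ioi (0:ℝ), (x:ℂ) * (U x : ℂ) * ((Fr N (t - τ x) : ℝ) : ℂ))
            = ∫ x in Ioi (0:ℝ), (((x * U x * Fr N (t - τ x) : ℝ)) : ℂ) := by
          apply integral_congr_ae
          filter_upwards with y
          push_cast
          ring
        rw [h4, h3] at hcm
        exact_mod_cast hcm
      rw [hTH_int]
      calc ‖∫ x in Ioi (0:ℝ), (x:ℂ) * (U x : ℂ) * (h (τ x) * ((Fr N (t - τ x) : ℝ) : ℂ))‖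
          ≤ ∫ x in Ioi (0:ℝ), ‖(x:ℂ) * (U x : ℂ) * (h (τ x) * ((Fr N (t - τ x) : ℝ) : ℂ))‖ :=
            norm_integral_le_integral_norm _
      _ ≤ ∫ x in Ioi (0:ℝ), x * U x * (ε/3 * Fr N (t - τ x)) := by
          apply integral_mono_ae
          · apply Integrable.norm
            have hψm : Measurable (fun s : ℝ => h s * ((Fr N (t - s) : ℝ) : ℂ)) := by
              apply hhm.mul
              exact Complex.measurable_ofReal.comp
                ((Fr_continuous N).measurable.comp (measurable_const.sub measurable_id))
            apply hint (fun s : ℝ => h s * ((Fr N (t - s) : ℝ) : ℂ)) hψm (ε/3 * N)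
            intro s
            rw [norm_mul, Complex.norm_real, Real.norm_eq_abs, abs_of_nonneg (Fr_nonneg _ _)]
            apply mul_le_mul (hhb s) (Fr_le _ _) (Fr_nonneg _ _) (by positivity)
          · apply hintR (fun s => ε/3 * Fr N (t - s))
            · exact (measurable_const.mul ((Fr_continuous N).measurable.comp
                (measurable_const.sub measurable_id)))
            · intro s
              rw [abs_of_nonneg (mul_nonneg (by positivity) (Fr_nonneg _ _))]
              exact mul_le_mul_of_nonneg_left (Fr_le _ _) (by positivity)
          · filter_upwards [ae_restrict_mem measurableSet_Ioi] with y hy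
            have hy0 : (0:ℝ) < y := hy
            have hU := hU0 y hy0
            rw [norm_mul, norm_mul, Complex.norm_real, Complex.norm_real, Real.norm_eq_abs,
              Real.norm_eq_abs, abs_of_pos hy0, abs_of_nonneg hU, norm_mul, Complex.norm_real,
              Real.norm_eq_abs, abs_of_nonneg (Fr_nonneg _ _)]
            have : ‖h (τ y)‖ * Fr N (t - τ y) ≤ ε/3 * Fr N (t - τ y) :=
              mul_le_mul_of_nonneg_right (hhb _) (Fr_nonneg _ _)
            calc y * U y * (‖h (τ y)‖ * Fr N (t - τ y))
                ≤ y * U y * (ε/3 * Fr N (t - τ y)) := by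
                  apply mul_le_mul_of_nonneg_left this (by positivity)
            _ = y * U y * (ε/3 * Fr N (t - τ y)) := rfl
      _ = ε/3 * ∫ x in Ioi (0:ℝ), x * U x * Fr N (t - τ x) := by
          rw [← integral_const_mul]
          apply integral_congr_ae
          filter_upwards with y
          ring
      _ = ε/3 := by rw [hmass, mul_one]
    -- final assembly
    have hcirc : ‖g t - ∑ k ∈ Finset.Icc (-(N:ℤ)) N, w k * nuk U k f * ee k t‖ ≤ ε := by
      rw [hTT]
      have hsplit : g t - (TP + TH) = (g t - P t) + ((P t - TP) + (-TH)) := by ring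
      rw [hsplit]
      calc ‖(g t - P t) + ((P t - TP) + (-TH))‖
          ≤ ‖g t - P t‖ + ‖(P t - TP) + (-TH)‖ := norm_add_le _ _
      _ ≤ ‖g t - P t‖ + (‖P t - TP‖ + ‖-TH‖) := by
          exact add_le_add le_rfl (norm_add_le _ _)
      _ ≤ ε/3 + (M/N + ε/3) := by
          apply add_le_add (hgP t)
          apply add_le_add _ (by rw [norm_neg]; exact hE)
          exact hD
      _ ≤ ε/3 + (ε/3 + ε/3) := by
          apply add_le_add le_rfl
          apply add_le_add hMN le_rfl
      _ = ε := by ring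
    -- transfer to x
    have hsum_eq : ∑ k ∈ Finset.Icc (-(N:ℤ)) N,
        (((1 : ℝ) - (|k| : ℝ) / (N : ℝ) : ℝ) : ℂ) * nuk U k f * phik k x
          = (x:ℂ) * ∑ k ∈ Finset.Icc (-(N:ℤ)) N, w k * nuk U k f * ee k t := by
      rw [Finset.mul_sum]
      refine Finset.sum_congr rfl fun k _ => ?_
      rw [hφ k x, hwdef, htdef]
      ring
    rw [hsum_eq, hfg x hx, htdef, ← mul_sub, norm_mul,
      Complex.norm_real, Real.norm_eq_abs, abs_of_pos hx, mul_comm (ε) x]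
    exact mul_le_mul_of_nonneg_left (hcirc) hx.le

  constructor
  · intro ε hε
    obtain ⟨N₀, _, h⟩ := main ε hε
    exact ⟨N₀, h⟩
  · intro ε hε
    obtain ⟨N₀, hN₀1, h⟩ := main ε hε
    refine ⟨fun x => ∑ k ∈ Finset.Icc (-(N₀ : ℤ)) (N₀ : ℤ),
      (((1 : ℝ) - (|k| : ℝ) / (N₀ : ℝ) : ℝ) : ℂ) * nuk U k f * phik k x, ?_, ?_⟩
    · have : (fun x => ∑ k ∈ Finset.Icc (-(N₀ : ℤ)) (N₀ : ℤ),
          (((1 : ℝ) - (|k| : ℝ) / (N₀ : ℝ) : ℝ) : ℂ) * nuk U k f * phik k x)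
          = ∑ k ∈ Finset.Icc (-(N₀ : ℤ)) (N₀ : ℤ),
            ((((1 : ℝ) - (|k| : ℝ) / (N₀ : ℝ) : ℝ) : ℂ) * nuk U k f) • phik k := by
        ext x
        rw [Finset.sum_apply]
        exact Finset.sum_congr rfl fun k _ => by simp [mul_assoc]
      rw [this]
      apply Submodule.sum_mem
      intro k _
      exact Submodule.smul_mem _ _ (Submodule.subset_span ⟨k, rfl⟩)
    · exact h N₀ le_rfl
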